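/- Let F be a homogeneous polynomial of degree 3 over ℂ in x_0, x_1, x_2, x_3, let t ∈ ℂ with t ≠ 0, and let f := x_4^3 − F(x_0,x_1,x_2,x_3) + x_5·(x_0·x_3 − x_1·x_2) + t·x_0·x_5^2. A 2-dimensional linear subspace W ⊆ ℂ^6 with e_5 ∈ W satisfies f(v) = 0 for all v ∈ W if and only if there exists a nonzero u ∈ W with u_5 = 0, u_0 = 0, u_1·u_2 = 0, u_4^3 = F(u_0,u_1,u_2,u_3), and W = span{e_5, u}. (Equivalently: for t ≠ 0, the lines on Y_{F,t} passing through p_0 are exactly the lines joining p_0 to a point of C_1 ∪ C_2.) -/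

import Mathlib

open MvPolynomial

/-- The cubic form `f = x₄³ − F(x₀,x₁,x₂,x₃) + x₅(x₀x₃ − x₁x₂) + t·x₀x₅²` defining the
cyclic cubic fourfold `Y_{F,t} ⊂ ℙ⁵`. -/
noncomputable def fPoly (F : MvPolynomial (Fin 4) ℂ) (t : ℂ) : MvPolynomial (Fin 6) ℂ :=
  X 4 ^ 3 - rename (Fin.castLE (by norm_num)) F
    + X 5 * (X 0 * X 3 - X 1 * X 2) + C t * X 0 * X 5 ^ 2

/-- The vector `e₅ = (0,0,0,0,0,1)`, representing the point `p₀ = [0:0:0:0:0:1]`. -/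
def e5 : Fin 6 → ℂ := ![0, 0, 0, 0, 0, 1]

private lemma eval_fPoly (F : MvPolynomial (Fin 4) ℂ) (t : ℂ) (v : Fin 6 → ℂ) :
    eval v (fPoly F t) =
      v 4 ^ 3 - eval ![v 0, v 1, v 2, v 3] F + v 5 * (v 0 * v 3 - v 1 * v 2)
        + t * v 0 * v 5 ^ 2 := by
  have h : eval v (rename (Fin.castLE (by norm_num : 4 ≤ 6)) F)
      = eval ![v 0, v 1, v 2, v 3] F := by
    rw [eval_rename]
    exact congrArg (fun g => eval g F) (by funext i; fin_cases i <;> rfl)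
  simp only [fPoly, map_add, map_sub, map_mul, map_pow, eval_C, eval_X, h]

private lemma eval_homog_smul (F : MvPolynomial (Fin 4) ℂ) (hF : F.IsHomogeneous 3)
    (c : ℂ) (v : Fin 4 → ℂ) : eval (fun i => c * v i) F = c ^ 3 * eval v F := by
  rw [eval_eq, eval_eq, Finset.mul_sum]
  refine Finset.sum_congr rfl fun d hd => ?_
  have hdeg : d.degree = 3 := by
    by_contra h
    exact mem_support_iff.mp hd (hF.coeff_eq_zero h)
  have hkey : (∏ i ∈ d.support, (c * v i) ^ d i)
      = c ^ 3 * ∏ i ∈ d.support, v i ^ d i := by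
    calc (∏ i ∈ d.support, (c * v i) ^ d i)
        = (∏ i ∈ d.support, c ^ d i) * ∏ i ∈ d.support, v i ^ d i := by
          rw [← Finset.prod_mul_distrib]
          exact Finset.prod_congr rfl fun i _ => mul_pow _ _ _
      _ = c ^ (∑ i ∈ d.support, d i) * ∏ i ∈ d.support, v i ^ d i := by
          rw [Finset.prod_pow_eq_pow_sum]
      _ = c ^ 3 * ∏ i ∈ d.support, v i ^ d i := by
          rw [← hdeg, Finsupp.degree]; rfl
  rw [hkey]; ring

/-- For `t ≠ 0`, the lines on `Y_{F,t}` passing through `p₀` are exactly the lines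
joining `p₀` to a point of `C₁ ∪ C₂`. -/
theorem stmt1 (F : MvPolynomial (Fin 4) ℂ) (hF : F.IsHomogeneous 3)
    (t : ℂ) (ht : t ≠ 0)
    (W : Submodule ℂ (Fin 6 → ℂ)) (hWdim : Module.finrank ℂ ↥W = 2) (he5 : e5 ∈ W) :
    (∀ v ∈ W, eval v (fPoly F t) = 0) ↔
      ∃ u : Fin 6 → ℂ, u ∈ W ∧ u ≠ 0 ∧ u 5 = 0 ∧ u 0 = 0 ∧ u 1 * u 2 = 0 ∧
        u 4 ^ 3 = eval ![u 0, u 1, u 2, u 3] F ∧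
        W = Submodule.span ℂ {e5, u} := by
  have he5_5 : e5 5 = 1 := rfl
  have he5_0 : e5 0 = 0 := rfl
  have he5_1 : e5 1 = 0 := rfl
  have he5_2 : e5 2 = 0 := rfl
  have he5_3 : e5 3 = 0 := rfl
  have he5_4 : e5 4 = 0 := rfl
  have he5ne : e5 ≠ 0 := by
    intro h
    have := congrFun h 5
    rw [he5_5] at this
    exact one_ne_zero this
  constructor
  · intro hvan
    obtain ⟨w, hwW, hw⟩ : ∃ w ∈ W, w ∉ Submodule.span ℂ {e5} := by
      by_contra h
      push_neg at h
      have hle : W ≤ Submodule.span ℂ {e5} := h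
      have h1 : Module.finrank ℂ ↥W ≤ Module.finrank ℂ ↥(Submodule.span ℂ {e5}) :=
        Submodule.finrank_mono hle
      rw [hWdim, finrank_span_singleton he5ne] at h1
      omega
    set u : Fin 6 → ℂ := w - w 5 • e5 with hu_def
    have huW : u ∈ W := W.sub_mem hwW (W.smul_mem _ he5)
    have hu5 : u 5 = 0 := by simp [hu_def, he5_5]
    have hune : u ≠ 0 := by
      intro h
      apply hw
      have : w = w 5 • e5 := by
        have := sub_eq_zero.mp h
        exact this
      exact this ▸ Submodule.smul_mem _ _ (Submodule.mem_span_singleton_self e5)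
    have key : ∀ s : ℂ,
        u 4 ^ 3 - eval ![u 0, u 1, u 2, u 3] F + s * (u 0 * u 3 - u 1 * u 2)
          + t * u 0 * s ^ 2 = 0 := by
      intro s
      have hmem : u + s • e5 ∈ W := W.add_mem huW (W.smul_mem s he5)
      have hv := hvan (u + s • e5) hmem
      rw [eval_fPoly] at hv
      have c0 : (u + s • e5) 0 = u 0 := by simp [he5_0]
      have c1 : (u + s • e5) 1 = u 1 := by simp [he5_1]
      have c2 : (u + s • e5) 2 = u 2 := by simp [he5_2]
      have c3 : (u + s • e5) 3 = u 3 := by simp [he5_3]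
      have c4 : (u + s • e5) 4 = u 4 := by simp [he5_4]
      have c5 : (u + s • e5) 5 = s := by simp [he5_5, hu5]
      rw [c0, c1, c2, c3, c4, c5] at hv
      exact hv
    have h0 := key 0
    have h1 := key 1
    have h2 := key (-1)
    have hu0 : u 0 = 0 := by
      have hC : t * u 0 = 0 := by linear_combination (h1 + h2) / 2 - h0
      exact (mul_eq_zero.mp hC).resolve_left ht
    have hB : u 1 * u 2 = 0 := by
      have : u 0 * u 3 - u 1 * u 2 = 0 := by linear_combination (h1 - h2) / 2
      linear_combination u 3 * hu0 - this
    have hcube : u 4 ^ 3 = eval ![u 0, u 1, u 2, u 3] F := by linear_combination h0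
    have hli : LinearIndependent ℂ ![e5, u] := by
      rw [LinearIndependent.pair_iff]
      intro a b hab
      have ha : a = 0 := by
        have := congrFun hab 5
        simpa [he5_5, hu5] using this
      subst ha
      simp only [zero_smul, zero_add] at hab
      rcases smul_eq_zero.mp hab with hb | hb
      · exact ⟨rfl, hb⟩
      · exact absurd hb hune
    have hrange : Set.range ![e5, u] = {e5, u} := by
      ext x
      simp only [Matrix.range_cons, Matrix.range_empty, Set.union_empty,
        Set.union_singleton, Set.mem_insert_iff, Set.mem_singleton_iff]
      tauto
    have hspan : W = Submodule.span ℂ {e5, u} := by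
      have hle : Submodule.span ℂ {e5, u} ≤ W := by
        rw [Submodule.span_le]
        rintro x (rfl | rfl)
        · exact he5
        · exact huW
      have hfr : Module.finrank ℂ ↥(Submodule.span ℂ {e5, u}) = 2 := by
        rw [← hrange, finrank_span_eq_card hli]
        simp
      exact (Submodule.eq_of_le_of_finrank_eq hle (by rw [hfr, hWdim])).symm
    exact ⟨u, huW, hune, hu5, hu0, hB, hcube, hspan⟩
  · rintro ⟨u, huW, hune, hu5, hu0, h12, hcube, hspan⟩ v hv
    rw [hspan, Submodule.mem_span_pair] at hv
    obtain ⟨a, b, rfl⟩ := hv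
    rw [eval_fPoly]
    have c0 : (a • e5 + b • u) 0 = 0 := by simp [he5_0, hu0]
    have c1 : (a • e5 + b • u) 1 = b * u 1 := by simp [he5_1]
    have c2 : (a • e5 + b • u) 2 = b * u 2 := by simp [he5_2]
    have c3 : (a • e5 + b • u) 3 = b * u 3 := by simp [he5_3]
    have c4 : (a • e5 + b • u) 4 = b * u 4 := by simp [he5_4]
    have c5 : (a • e5 + b • u) 5 = a := by simp [he5_5, hu5]
    rw [c0, c1, c2, c3, c4, c5]
    have hh : eval ![(0 : ℂ), b * u 1, b * u 2, b * u 3] F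
        = b ^ 3 * eval ![u 0, u 1, u 2, u 3] F := by
      rw [← eval_homog_smul F hF b ![u 0, u 1, u 2, u 3]]
      exact congrArg (fun g => eval g F) (by funext i; fin_cases i <;> simp [hu0])
    rw [hh]
    linear_combination b ^ 3 * hcube - a * b ^ 2 * h12
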